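/- The semitopological semilattice (X,τ) is Lawson: the base ℬ = {V_α(x) : x ∈ X, α ∈ [‖x‖,λ)} of the topology τ consists of subsemilattices of X, i.e., each V_α(x) is closed under the pointwise minimum operation. -/

import Mathlib

universe u v

open Ordinal Set Topology Cardinal

namespace LawsonExample

def Xset (lam : Cardinal.{u}) : Set (Ordinal.{u} → Fin 3) :=
  {x | (∀ γ : Ordinal.{u}, lam.ord ≤ γ → x γ = 2) ∧ {γ : Ordinal.{u} | x γ ≠ 2}.Finite}

noncomputable def nrm (x : Ordinal.{u} → Fin 3) : Ordinal.{u} :=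
  sInf {α | ∀ γ, α ≤ γ → x γ = 2}

noncomputable def Vnbhd (lam : Cardinal.{u}) (x : ↥(Xset lam)) (α : Ordinal.{u}) :
    Set ↥(Xset lam) :=
  if x.1 0 = 2 then {x}
  else if x.1 0 = 1 then
    {y | (∀ γ, 1 ≤ γ → γ < α → y.1 γ = x.1 γ) ∧
         (∀ γ, α ≤ γ → γ < lam.ord → y.1 γ ≠ 1) ∧
         (y.1 0 = 1 ∨ (y.1 0 = 2 ∧ α < nrm y.1))}
  else
    {y | (∀ γ, 1 ≤ γ → γ < α → y.1 γ = x.1 γ) ∧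
         (y.1 0 = 0 ∨ (y.1 0 = 2 ∧ α < nrm y.1 ∧ y.1 (Ordinal.pred (nrm y.1)) = 1))}

def tauSet (lam : Cardinal.{u}) : Set (Set ↥(Xset lam)) :=
  {U | ∀ x ∈ U, ∃ α : Ordinal.{u}, nrm x.1 ≤ α ∧ α < lam.ord ∧ Vnbhd lam x α ⊆ U}

lemma nrm_spec {lam : Cardinal.{u}} (x : ↥(Xset lam)) {γ : Ordinal.{u}}
    (h : nrm x.1 ≤ γ) : x.1 γ = 2 := by
  have hne : {α : Ordinal.{u} | ∀ γ, α ≤ γ → x.1 γ = 2}.Nonempty :=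
    ⟨lam.ord, fun γ hγ => x.2.1 γ hγ⟩
  exact csInf_mem hne γ h

lemma nrm_lt {lam : Cardinal.{u}} (hlam : ℵ₀ ≤ lam) (x : ↥(Xset lam)) :
    nrm x.1 < lam.ord := by
  have hlim : Order.IsSuccLimit lam.ord := Cardinal.isSuccLimit_ord hlam
  rcases eq_empty_or_nonempty {γ | x.1 γ ≠ 2} with he | hne
  · have h0 : nrm x.1 ≤ 0 := csInf_le' (fun γ _ => by
      by_contra hc
      exact (eq_empty_iff_forall_notMem.1 he γ) hc)
    exact lt_of_le_of_lt h0 hlim.pos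
  · set m := sSup {γ | x.1 γ ≠ 2} with hm_def
    have hmem : m ∈ {γ | x.1 γ ≠ 2} := hne.csSup_mem x.2.2
    have hm : m < lam.ord := lt_of_not_ge fun h => hmem (x.2.1 m h)
    have hb : nrm x.1 ≤ m + 1 := csInf_le' (fun γ hγ => by
      by_contra hc
      have hle : γ ≤ m := le_csSup x.2.2.bddAbove hc
      rw [Ordinal.add_one_eq_succ] at hγ
      exact absurd hγ (not_le.2 (lt_of_le_of_lt hle (Order.lt_succ m))))
    have : m + 1 < lam.ord := by
      rw [Ordinal.add_one_eq_succ]; exact hlim.succ_lt hm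
    exact lt_of_le_of_lt hb this

lemma fin3_cases (a : Fin 3) : a = 0 ∨ a = 1 ∨ a = 2 := by revert a; decide

lemma mem_Vnbhd_self {lam : Cardinal.{u}} (x : ↥(Xset lam)) {α : Ordinal.{u}}
    (h : nrm x.1 ≤ α) : x ∈ Vnbhd lam x α := by
  rcases fin3_cases (x.1 0) with h0 | h0 | h0
  · have h2 : x.1 0 ≠ 2 := by rw [h0]; decide
    have h1 : x.1 0 ≠ 1 := by rw [h0]; decide
    rw [Vnbhd, if_neg h2, if_neg h1]
    exact ⟨fun γ _ _ => rfl, Or.inl h0⟩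
  · have h2 : x.1 0 ≠ 2 := by rw [h0]; decide
    rw [Vnbhd, if_neg h2, if_pos h0]
    refine ⟨fun γ _ _ => rfl, fun γ hγ _ => ?_, Or.inl h0⟩
    rw [nrm_spec x (le_trans h hγ)]; decide
  · rw [Vnbhd, if_pos h0]; exact rfl

lemma Vnbhd_mono {lam : Cardinal.{u}} (x : ↥(Xset lam)) {α β : Ordinal.{u}}
    (hα : nrm x.1 ≤ α) (hαβ : α ≤ β) : Vnbhd lam x β ⊆ Vnbhd lam x α := by
  rcases fin3_cases (x.1 0) with h0 | h0 | h0
  · have h2 : x.1 0 ≠ 2 := by rw [h0]; decide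
    have h1 : x.1 0 ≠ 1 := by rw [h0]; decide
    rw [Vnbhd, Vnbhd, if_neg h2, if_neg h1, if_neg h2, if_neg h1]
    rintro y ⟨hr, hy⟩
    refine ⟨fun γ h1γ h2γ => hr γ h1γ (lt_of_lt_of_le h2γ hαβ), ?_⟩
    rcases hy with hy | ⟨hy2, hylt, hyp⟩
    · exact Or.inl hy
    · exact Or.inr ⟨hy2, lt_of_le_of_lt hαβ hylt, hyp⟩
  · have h2 : x.1 0 ≠ 2 := by rw [h0]; decide
    rw [Vnbhd, Vnbhd, if_neg h2, if_pos h0, if_neg h2, if_pos h0]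
    rintro y ⟨hr, hns, hy⟩
    have hα1 : 1 ≤ α := by
      by_contra hc
      have : α = 0 := Ordinal.lt_one_iff_zero.1 (not_le.1 hc)
      have : x.1 0 = 2 := nrm_spec x (by rw [← this]; exact hα)
      exact h2 this
    refine ⟨fun γ h1γ h2γ => hr γ h1γ (lt_of_lt_of_le h2γ hαβ), ?_, ?_⟩
    · intro γ hγ hγlt
      by_cases hγβ : β ≤ γ
      · exact hns γ hγβ hγlt
      · have h1γ : 1 ≤ γ := le_trans hα1 hγ
        rw [hr γ h1γ (not_le.1 hγβ)]
        rw [nrm_spec x (le_trans hα hγ)]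
        decide
    · rcases hy with hy | ⟨hy2, hylt⟩
      · exact Or.inl hy
      · exact Or.inr ⟨hy2, lt_of_le_of_lt hαβ hylt⟩
  · rw [Vnbhd, Vnbhd, if_pos h0, if_pos h0]

noncomputable def tau (lam : Cardinal.{u}) (hlam : ℵ₀ ≤ lam) :
    TopologicalSpace ↥(Xset lam) where
  IsOpen U := U ∈ tauSet lam
  isOpen_univ := fun x _ =>
    ⟨nrm x.1, le_rfl, nrm_lt hlam x, subset_univ _⟩
  isOpen_inter := by
    intro U V hU hV x hx
    obtain ⟨α, hα1, hα2, hα3⟩ := hU x hx.1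
    obtain ⟨β, hβ1, hβ2, hβ3⟩ := hV x hx.2
    refine ⟨max α β, le_trans hα1 (le_max_left _ _), max_lt hα2 hβ2, fun y hy => ?_⟩
    exact ⟨hα3 (Vnbhd_mono x hα1 (le_max_left _ _) hy),
           hβ3 (Vnbhd_mono x hβ1 (le_max_right _ _) hy)⟩
  isOpen_sUnion := by
    intro S hS x hx
    obtain ⟨U, hU, hxU⟩ := hx
    obtain ⟨α, hα1, hα2, hα3⟩ := hS U hU x hxU
    exact ⟨α, hα1, hα2, fun y hy => ⟨U, hU, hα3 hy⟩⟩


/-- The semilattice operation of `X`: pointwise minimum. -/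
noncomputable def pmin (lam : Cardinal.{u}) (x y : ↥(Xset lam)) : ↥(Xset lam) :=
  ⟨fun γ => min (x.1 γ) (y.1 γ), by
    constructor
    · intro γ hγ
      show min (x.1 γ) (y.1 γ) = 2
      rw [x.2.1 γ hγ, y.2.1 γ hγ, min_self]
    · refine (x.2.2.union y.2.2).subset fun γ hγ => ?_
      have hγ' : min (x.1 γ) (y.1 γ) ≠ 2 := hγ
      simp only [mem_union, mem_setOf_eq]
      by_contra hc
      push_neg at hc
      rw [hc.1, hc.2, min_self] at hγ'
      exact hγ' rfl⟩

/-- `B` is a base of the topology `t`: it consists of open sets, and every open set is a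
union of members of `B`. -/
def IsBase {X : Type v} (t : TopologicalSpace X) (B : Set (Set X)) : Prop :=
  (∀ U ∈ B, IsOpen[t] U) ∧ ∀ U, IsOpen[t] U → ∃ S ⊆ B, U = ⋃₀ S

/-- The family `ℬ = {V_α(x) : x ∈ X, α ∈ [‖x‖, λ)}`. -/
def Vfamily (lam : Cardinal.{u}) : Set (Set ↥(Xset lam)) :=
  {W | ∃ (x : ↥(Xset lam)) (α : Ordinal.{u}), nrm x.1 ≤ α ∧ α < lam.ord ∧ W = Vnbhd lam x α}

/-- The weight of a topological space: the smallest cardinality of a base of its topology. -/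
noncomputable def weight {X : Type v} (t : TopologicalSpace X) : Cardinal.{v} :=
  sInf {c : Cardinal.{v} | ∃ B : Set (Set X), IsBase t B ∧ c = Cardinal.mk ↥B}

/-- The function `𝟎_β`, with `𝟎_β β = 0` and `𝟎_β γ = 2` for `γ ≠ β`. -/
noncomputable def zeroF (β : Ordinal.{u}) : Ordinal.{u} → Fin 3 :=
  fun γ => if γ = β then 0 else 2

/-- The function `𝟏_β`, with `𝟏_β β = 1` and `𝟏_β γ = 2` for `γ ≠ β`. -/
noncomputable def oneF (β : Ordinal.{u}) : Ordinal.{u} → Fin 3 :=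
  fun γ => if γ = β then 1 else 2

lemma zeroF_mem (lam : Cardinal.{u}) {β : Ordinal.{u}} (h : β < lam.ord) :
    zeroF β ∈ Xset lam := by
  constructor
  · intro γ hγ
    have hne : γ ≠ β := fun e => absurd h (not_lt.2 (e ▸ hγ))
    simp [zeroF, hne]
  · refine (finite_singleton β).subset fun γ hγ => ?_
    simp only [mem_setOf_eq, zeroF] at hγ
    by_contra hc
    simp only [mem_singleton_iff] at hc
    rw [if_neg hc] at hγ
    exact hγ rfl

lemma oneF_mem (lam : Cardinal.{u}) {β : Ordinal.{u}} (h : β < lam.ord) :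
    oneF β ∈ Xset lam := by
  constructor
  · intro γ hγ
    have hne : γ ≠ β := fun e => absurd h (not_lt.2 (e ▸ hγ))
    simp [oneF, hne]
  · refine (finite_singleton β).subset fun γ hγ => ?_
    simp only [mem_setOf_eq, oneF] at hγ
    by_contra hc
    simp only [mem_singleton_iff] at hc
    rw [if_neg hc] at hγ
    exact hγ rfl

/-- `𝟎_β` as an element of `X` (for `β < λ`). -/
noncomputable def zeroE (lam : Cardinal.{u}) {β : Ordinal.{u}} (h : β < lam.ord) :
    ↥(Xset lam) := ⟨zeroF β, zeroF_mem lam h⟩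

/-- `𝟏_β` as an element of `X` (for `β < λ`). -/
noncomputable def oneE (lam : Cardinal.{u}) {β : Ordinal.{u}} (h : β < lam.ord) :
    ↥(Xset lam) := ⟨oneF β, oneF_mem lam h⟩


lemma min_ne_one {a b : Fin 3} (ha : a ≠ 1) (hb : b ≠ 1) : min a b ≠ 1 := by
  revert a b; decide

lemma min_eq_two_left {a b : Fin 3} (h : min a b = 2) : a = 2 := by revert a b; decide

lemma min_eq_two_right {a b : Fin 3} (h : min a b = 2) : b = 2 := by revert a b; decide

lemma nrm_le_of_bound {lam : Cardinal.{u}} (x : ↥(Xset lam)) {α : Ordinal.{u}}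
    (h : ∀ γ, α ≤ γ → x.1 γ = 2) : nrm x.1 ≤ α := csInf_le' h

lemma nrm_pmin {lam : Cardinal.{u}} (y z : ↥(Xset lam)) :
    nrm (pmin lam y z).1 = max (nrm y.1) (nrm z.1) := by
  apply le_antisymm
  · refine nrm_le_of_bound _ fun γ hγ => ?_
    show min (y.1 γ) (z.1 γ) = 2
    rw [nrm_spec y (le_trans (le_max_left _ _) hγ),
        nrm_spec z (le_trans (le_max_right _ _) hγ)]
    decide
  · refine max_le ?_ ?_
    · exact nrm_le_of_bound y fun γ hγ => min_eq_two_left (nrm_spec (pmin lam y z) hγ)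
    · exact nrm_le_of_bound z fun γ hγ => min_eq_two_right (nrm_spec (pmin lam y z) hγ)

lemma nrm_pos_of_ne_two {lam : Cardinal.{u}} (x : ↥(Xset lam)) (h : x.1 0 ≠ 2) :
    1 ≤ nrm x.1 := by
  by_contra hc
  have h0 : nrm x.1 = 0 := Ordinal.lt_one_iff_zero.1 (not_le.1 hc)
  exact h (nrm_spec x (le_of_eq h0))

lemma key_pred {lam : Cardinal.{u}} (y z : ↥(Xset lam)) (hyz : nrm y.1 ≤ nrm z.1)
    (hyp : y.1 (Ordinal.pred (nrm y.1)) = 1)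
    (hzp : z.1 (Ordinal.pred (nrm z.1)) = 1) :
    (pmin lam y z).1 (Ordinal.pred (nrm (pmin lam y z).1)) = 1 := by
  have hw : nrm (pmin lam y z).1 = nrm z.1 := by rw [nrm_pmin]; exact max_eq_right hyz
  rw [hw]
  show min (y.1 (Ordinal.pred (nrm z.1))) (z.1 (Ordinal.pred (nrm z.1))) = 1
  rcases eq_or_lt_of_le hyz with heq | hlt
  · rw [← heq, hyp, heq, hzp]; decide
  · have hp : Ordinal.pred (nrm z.1) < nrm z.1 := by
      by_contra h
      push_neg at h
      have := nrm_spec z h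
      rw [hzp] at this
      exact absurd this (by decide)
    have hsucc : Order.succ (Ordinal.pred (nrm z.1)) = nrm z.1 :=
      Ordinal.succ_pred_eq_iff_not_isSuccPrelimit.2 (Ordinal.pred_lt_iff_not_isSuccPrelimit.1 hp)
    have hyle : nrm y.1 ≤ Ordinal.pred (nrm z.1) := by
      rw [← hsucc] at hlt
      exact Order.lt_succ_iff.1 hlt
    rw [nrm_spec y hyle, hzp]; decide

lemma Vnbhd_open {lam : Cardinal.{u}} (hlam : ℵ₀ ≤ lam) (x : ↥(Xset lam))
    {α : Ordinal.{u}} (hα : nrm x.1 ≤ α) (hαl : α < lam.ord) :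
    Vnbhd lam x α ∈ tauSet lam := by
  intro y hy
  by_cases hy2 : y.1 0 = 2
  · refine ⟨nrm y.1, le_rfl, nrm_lt hlam y, ?_⟩
    rw [Vnbhd, if_pos hy2]
    intro z hz
    rw [mem_singleton_iff] at hz
    exact hz ▸ hy
  rcases fin3_cases (x.1 0) with h0 | h0 | h0
  · have hx2 : x.1 0 ≠ 2 := by rw [h0]; decide
    have hx1 : x.1 0 ≠ 1 := by rw [h0]; decide
    rw [Vnbhd, if_neg hx2, if_neg hx1] at hy
    obtain ⟨hr, htag⟩ := hy
    have hy0 : y.1 0 = 0 := by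
      rcases htag with h | ⟨h, _⟩
      · exact h
      · exact absurd h hy2
    have hy1 : y.1 0 ≠ 1 := by rw [hy0]; decide
    refine ⟨max α (nrm y.1), le_max_right _ _, max_lt hαl (nrm_lt hlam y), fun z hz => ?_⟩
    rw [Vnbhd, if_neg hy2, if_neg (by rw [hy0]; decide : y.1 0 ≠ 1)] at hz
    obtain ⟨hr', htag'⟩ := hz
    rw [Vnbhd, if_neg hx2, if_neg hx1]
    refine ⟨fun γ h1 h2 => ?_, ?_⟩
    · rw [hr' γ h1 (lt_of_lt_of_le h2 (le_max_left _ _))]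
      exact hr γ h1 h2
    · rcases htag' with h | ⟨h2', hlt', hpred'⟩
      · exact Or.inl h
      · exact Or.inr ⟨h2', lt_of_le_of_lt (le_max_left _ _) hlt', hpred'⟩
  · have hx2 : x.1 0 ≠ 2 := by rw [h0]; decide
    rw [Vnbhd, if_neg hx2, if_pos h0] at hy
    obtain ⟨hr, hns, htag⟩ := hy
    have hy0 : y.1 0 = 1 := by
      rcases htag with h | ⟨h, _⟩
      · exact h
      · exact absurd h hy2
    have hα1 : 1 ≤ α := le_trans (nrm_pos_of_ne_two x hx2) hα
    refine ⟨max α (nrm y.1), le_max_right _ _, max_lt hαl (nrm_lt hlam y), fun z hz => ?_⟩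
    rw [Vnbhd, if_neg hy2, if_pos hy0] at hz
    obtain ⟨hr', hns', htag'⟩ := hz
    rw [Vnbhd, if_neg hx2, if_pos h0]
    refine ⟨fun γ h1 h2 => ?_, fun γ hγ hγl => ?_, ?_⟩
    · rw [hr' γ h1 (lt_of_lt_of_le h2 (le_max_left _ _))]
      exact hr γ h1 h2
    · by_cases hβγ : max α (nrm y.1) ≤ γ
      · exact hns' γ hβγ hγl
      · rw [hr' γ (le_trans hα1 hγ) (not_le.1 hβγ)]
        exact hns γ hγ hγl
    · rcases htag' with h | ⟨h2', hlt'⟩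
      · exact Or.inl h
      · exact Or.inr ⟨h2', lt_of_le_of_lt (le_max_left _ _) hlt'⟩
  · rw [Vnbhd, if_pos h0] at hy
    rw [mem_singleton_iff] at hy
    exact absurd (hy ▸ h0) hy2

/-- The semitopological semilattice `(X, τ)` is Lawson: the base
`ℬ = {V_α(x) : x ∈ X, α ∈ [‖x‖, λ)}` of the topology `τ` consists of subsemilattices of `X`,
i.e. each `V_α(x)` is closed under the pointwise minimum operation. -/
theorem lawson_tau (lam : Cardinal.{u}) (hlam : ℵ₀ ≤ lam) :
    IsBase (tau lam hlam) (Vfamily lam) ∧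
    ∀ (x : ↥(Xset lam)) (α : Ordinal.{u}), nrm x.1 ≤ α → α < lam.ord →
      ∀ y ∈ Vnbhd lam x α, ∀ z ∈ Vnbhd lam x α, pmin lam y z ∈ Vnbhd lam x α := by
  constructor
  · constructor
    · rintro U ⟨x, α, hα, hαl, rfl⟩
      exact Vnbhd_open hlam x hα hαl
    · intro U hU
      refine ⟨{W | W ∈ Vfamily lam ∧ W ⊆ U}, fun W hW => hW.1, ?_⟩
      apply Subset.antisymm
      · intro x hx
        obtain ⟨α, hα1, hα2, hα3⟩ := hU x hx
        exact ⟨Vnbhd lam x α, ⟨⟨x, α, hα1, hα2, rfl⟩, hα3⟩, mem_Vnbhd_self x hα1⟩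
      · rintro x ⟨W, ⟨_, hWU⟩, hxW⟩
        exact hWU hxW
  · intro x α hα hαl y hy z hz
    rcases fin3_cases (x.1 0) with h0 | h0 | h0
    · have hx2 : x.1 0 ≠ 2 := by rw [h0]; decide
      have hx1 : x.1 0 ≠ 1 := by rw [h0]; decide
      rw [Vnbhd, if_neg hx2, if_neg hx1] at hy hz ⊢
      obtain ⟨hry, htagy⟩ := hy
      obtain ⟨hrz, htagz⟩ := hz
      refine ⟨fun γ h1 h2 => ?_, ?_⟩
      · show min (y.1 γ) (z.1 γ) = x.1 γ
        rw [hry γ h1 h2, hrz γ h1 h2, min_self]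
      · rcases htagy with hy0 | ⟨hy0, hyα, hyp⟩
        · left
          show min (y.1 0) (z.1 0) = 0
          rcases htagz with hz0 | ⟨hz0, _, _⟩
          · rw [hy0, hz0]; decide
          · rw [hy0, hz0]; decide
        · rcases htagz with hz0 | ⟨hz0, hzα, hzp⟩
          · left
            show min (y.1 0) (z.1 0) = 0
            rw [hy0, hz0]; decide
          · right
            refine ⟨?_, ?_, ?_⟩
            · show min (y.1 0) (z.1 0) = 2
              rw [hy0, hz0]; decide
            · rw [nrm_pmin]
              exact lt_of_lt_of_le hyα (le_max_left _ _)
            · rcases le_total (nrm y.1) (nrm z.1) with hle | hle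
              · exact key_pred y z hle hyp hzp
              · have hcomm : pmin lam y z = pmin lam z y := by
                  apply Subtype.ext
                  funext γ
                  exact min_comm _ _
                rw [hcomm]
                exact key_pred z y hle hzp hyp
    · have hx2 : x.1 0 ≠ 2 := by rw [h0]; decide
      rw [Vnbhd, if_neg hx2, if_pos h0] at hy hz ⊢
      obtain ⟨hry, hnsy, htagy⟩ := hy
      obtain ⟨hrz, hnsz, htagz⟩ := hz
      refine ⟨fun γ h1 h2 => ?_, fun γ hγ hγl => ?_, ?_⟩
      · show min (y.1 γ) (z.1 γ) = x.1 γ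
        rw [hry γ h1 h2, hrz γ h1 h2, min_self]
      · exact min_ne_one (hnsy γ hγ hγl) (hnsz γ hγ hγl)
      · rcases htagy with hy0 | ⟨hy0, hyα⟩
        · rcases htagz with hz0 | ⟨hz0, hzα⟩
          · left
            show min (y.1 0) (z.1 0) = 1
            rw [hy0, hz0]; decide
          · left
            show min (y.1 0) (z.1 0) = 1
            rw [hy0, hz0]; decide
        · rcases htagz with hz0 | ⟨hz0, hzα⟩
          · left
            show min (y.1 0) (z.1 0) = 1
            rw [hy0, hz0]; decide
          · right
            refine ⟨?_, ?_⟩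
            · show min (y.1 0) (z.1 0) = 2
              rw [hy0, hz0]; decide
            · rw [nrm_pmin]
              exact lt_of_lt_of_le hyα (le_max_left _ _)
    · rw [Vnbhd, if_pos h0] at hy hz ⊢
      rw [mem_singleton_iff] at hy hz
      rw [mem_singleton_iff, hy, hz]
      apply Subtype.ext
      funext γ
      exact min_self _

end LawsonExample
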